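/- For every nonzero p ∈ P*, one has |⟨p,p⟩| ≥ 2; equivalently, since the form is negative definite on the ℚ-span of P, every nonzero p ∈ P* satisfies ⟨p,p⟩ ≤ −2. -/

import Mathlib

noncomputable section

abbrev F3 : Type := ZMod 3 × ZMod 3
abbrev IP : Type := F3 × Fin 2
abbrev VP : Type := IP → ℚ

/-- The basis vectors `E_t^(k)` (with `k : Fin 2` corresponding to `k+1 ∈ {1,2}`). -/
def Ev (t : F3) (k : Fin 2) : VP := Pi.single (t, k) 1

/-- Gram coefficients of the bilinear form on `V`. -/
def GP : IP → IP → ℚ := fun i j =>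
  if i.1 = j.1 then (if i.2 = j.2 then -2 else 1) else 0

/-- The symmetric bilinear form on `V`. -/
def BP (x y : VP) : ℚ := ∑ i : IP, ∑ j : IP, x i * GP i j * y j

lemma BP_add_left (a b x : VP) : BP (a + b) x = BP a x + BP b x := by
  simp only [BP, Pi.add_apply, add_mul, Finset.sum_add_distrib]

lemma BP_zsmul_left (c : ℤ) (a x : VP) : BP (c • a) x = c * BP a x := by
  simp only [BP, Pi.smul_apply, zsmul_eq_mul, Finset.mul_sum, mul_assoc]

lemma BP_zero_left (x : VP) : BP 0 x = 0 := by
  simp [BP]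

/-- `E_t := E_t^(1) + 2·E_t^(2)`. -/
def EV (t : F3) : VP := Ev t 0 + 2 • Ev t 1

/-- The affine line in `𝔽₃²` through `p` with direction `d`. -/
def lineF (p d : F3) : Finset F3 := Finset.image (fun s : ZMod 3 => p + s • d) Finset.univ

def IsLine (L : Finset F3) : Prop := ∃ p d : F3, d ≠ 0 ∧ L = lineF p d

def AreParallel (L L' : Finset F3) : Prop :=
  ∃ p p' d : F3, d ≠ 0 ∧ L = lineF p d ∧ L' = lineF p' d

/-- `e(L) := (1/3)·∑_{t∈L} E_t`. -/
def eL (L : Finset F3) : VP := (3 : ℚ)⁻¹ • ∑ t ∈ L, EV t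

/-- Generators of the root lattice `R` of type `A₂⁹`. -/
def Rgen : Set VP := {x | ∃ t k, x = Ev t k}

/-- The root lattice `R`. -/
def Rlat : Submodule ℤ VP := Submodule.span ℤ Rgen

/-- The lattice `P`. -/
def Plat : Submodule ℤ VP :=
  Submodule.span ℤ (Rgen ∪ {x | ∃ L L', AreParallel L L' ∧ x = eL L - eL L'})

/-- The dual lattice `Λ* = {v | ⟨v,λ⟩ ∈ ℤ for all λ ∈ Λ}`. -/
def dualP (Λ : Submodule ℤ VP) : Submodule ℤ VP where
  carrier := {v | ∀ x ∈ Λ, ∃ n : ℤ, BP v x = n}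
  zero_mem' := fun x _ => ⟨0, by simp [BP_zero_left]⟩
  add_mem' := by
    intro a b ha hb x hx
    obtain ⟨n, hn⟩ := ha x hx
    obtain ⟨m, hm⟩ := hb x hx
    exact ⟨n + m, by rw [BP_add_left, hn, hm]; push_cast; ring⟩
  smul_mem' := by
    intro c v hv x hx
    obtain ⟨n, hn⟩ := hv x hx
    exact ⟨c * n, by rw [BP_zsmul_left, hn]; push_cast; ring⟩

def L12 : Finset F3 := lineF (0, 0) (0, 1)
def L34 : Finset F3 := lineF (0, 0) (1, 0)
def L00 : Finset F3 := lineF (0, 0) (1, 1)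

def p1 : VP := eL L34 + eL L00
def p2 : VP := eL L12 + eL L34
def p3 : VP := eL L12 + eL L00

def pv : Fin 3 → VP := ![p1, p2, p3]

lemma BP_sub_right (x a b : VP) : BP x (a - b) = BP x a - BP x b := by
  simp only [BP, Pi.sub_apply, mul_sub, Finset.sum_sub_distrib]

lemma BP_qsmul_right (c : ℚ) (x a : VP) : BP x (c • a) = c * BP x a := by
  simp only [BP, Pi.smul_apply, smul_eq_mul, Finset.mul_sum]
  apply Finset.sum_congr rfl; intro i _
  apply Finset.sum_congr rfl; intro j _
  ring

lemma BP_add_right (x a b : VP) : BP x (a + b) = BP x a + BP x b := by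
  simp only [BP, Pi.add_apply, mul_add, Finset.sum_add_distrib]

lemma BP_zero_right (x : VP) : BP x 0 = 0 := by
  simp [BP]

lemma BP_sum_right {α : Type*} (x : VP) (s : Finset α) (f : α → VP) :
    BP x (∑ t ∈ s, f t) = ∑ t ∈ s, BP x (f t) := by
  classical
  induction s using Finset.induction with
  | empty => simp [BP_zero_right]
  | insert _ _ h ih => rw [Finset.sum_insert h, BP_add_right, ih, Finset.sum_insert h]

lemma sum_IP (g : IP → ℚ) : ∑ i : IP, g i = ∑ t : F3, (g (t,0) + g (t,1)) := by
  rw [Fintype.sum_prod_type]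
  exact Finset.sum_congr rfl fun t _ => by rw [Fin.sum_univ_two]

lemma BP_eval (x y : VP) : BP x y =
    ∑ t : F3, (x (t,0) * (-2 * y (t,0) + y (t,1)) + x (t,1) * (y (t,0) - 2 * y (t,1))) := by
  rw [BP, sum_IP]
  apply Finset.sum_congr rfl; intro t _
  rw [sum_IP, sum_IP]
  simp only [GP, ite_mul, mul_ite, zero_mul, mul_zero]
  simp only [Finset.sum_add_distrib, Finset.sum_ite_eq, Finset.mem_univ, if_true]
  norm_num
  ring

lemma BP_Ev0 (x : VP) (t : F3) : BP x (Ev t 0) = -2 * x (t,0) + x (t,1) := by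
  rw [BP_eval]
  simp only [Ev, Pi.single_apply, Prod.mk.injEq]
  rw [Finset.sum_eq_single t]
  · simp; ring
  · intro s _ hs; simp [hs]
  · simp

lemma BP_Ev1 (x : VP) (t : F3) : BP x (Ev t 1) = x (t,0) - 2 * x (t,1) := by
  rw [BP_eval]
  simp only [Ev, Pi.single_apply, Prod.mk.injEq]
  rw [Finset.sum_eq_single t]
  · simp; ring
  · intro s _ hs; simp [hs]
  · simp

lemma BP_self (x : VP) :
    BP x x = ∑ t : F3, (-2 * x (t,0)^2 + 2 * x (t,0) * x (t,1) - 2 * x (t,1)^2) := by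
  rw [BP_eval]
  apply Finset.sum_congr rfl; intro t _
  ring

set_option synthInstance.maxSize 1000 in
set_option synthInstance.maxHeartbeats 1000000 in
lemma key_line (t u : F3) : ∃ d p1 : F3, d ≠ 0 ∧
    (∀ s : ZMod 3, s ≠ 0 → t + s • d ≠ u ∧ t + s • d ≠ t) ∧
    (∀ s : ZMod 3, p1 + s • d ≠ t ∧ p1 + s • d ≠ u) := by
  revert u; revert t; decide

lemma smul_inj (d : F3) (hd : d ≠ 0) : ∀ s s' : ZMod 3, s • d = s' • d → s = s' := by
  revert hd; revert d; decide

lemma sum_lineF {M : Type*} [AddCommMonoid M] (g : F3 → M) (pp d : F3) (hd : d ≠ 0) :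
    ∑ t ∈ lineF pp d, g t = ∑ s : ZMod 3, g (pp + s • d) := by
  rw [lineF, Finset.sum_image]
  intro s _ s' _ h
  exact smul_inj d hd s s' (by exact add_left_cancel h)

lemma weight3 (c : F3 → ZMod 3)
    (Hc : ∀ p0 p1 d : F3, d ≠ 0 →
      ∑ s : ZMod 3, c (p0 + s • d) = ∑ s : ZMod 3, c (p1 + s • d))
    (t0 : F3) (h0 : c t0 ≠ 0) :
    ∃ u v : F3, u ≠ t0 ∧ v ≠ t0 ∧ u ≠ v ∧ c u ≠ 0 ∧ c v ≠ 0 := by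
  by_contra hcon
  push_neg at hcon
  have hu : ∃ u : F3, ∀ v : F3, v ≠ t0 → v ≠ u → c v = 0 := by
    by_cases h : ∃ u : F3, u ≠ t0 ∧ c u ≠ 0
    · obtain ⟨u, hu1, hu2⟩ := h
      refine ⟨u, fun v hv1 hv2 => ?_⟩
      exact hcon u v hu1 hv1 (Ne.symm hv2) hu2
    · push_neg at h
      exact ⟨t0, fun v hv _ => h v hv⟩
  obtain ⟨u, hu⟩ := hu
  obtain ⟨d, p1, hd, hline0, hline1⟩ := key_line t0 u
  have e0 : ∑ s : ZMod 3, c (t0 + s • d) = c t0 := by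
    rw [Finset.sum_eq_single 0]
    · simp
    · intro s _ hs
      obtain ⟨h1, h2⟩ := hline0 s hs
      exact hu _ h2 h1
    · simp
  have e1 : ∑ s : ZMod 3, c (p1 + s • d) = 0 := by
    apply Finset.sum_eq_zero
    intro s _
    exact hu _ (hline1 s).1 (hline1 s).2
  exact h0 (by rw [← e0, Hc t0 p1 d hd, e1])

theorem statement4 :
    ∀ p ∈ dualP Plat, p ≠ 0 → 2 ≤ |BP p p| ∧ BP p p ≤ -2 := by
  intro p hp hpne
  have hEv : ∀ t k, ∃ m : ℤ, BP p (Ev t k) = m := fun t k =>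
    hp _ (Submodule.subset_span (Set.mem_union_left _ ⟨t, k, rfl⟩))
  choose n hn using hEv
  -- coordinates of p in terms of the integers n
  have hx : ∀ t : F3, p (t,0) = -(2*(n t 0 : ℚ) + (n t 1 : ℚ))/3 ∧
      p (t,1) = -((n t 0 : ℚ) + 2*(n t 1 : ℚ))/3 := by
    intro t
    have h0 := hn t 0; rw [BP_Ev0] at h0
    have h1 := hn t 1; rw [BP_Ev1] at h1
    constructor <;> linarith
  set q : F3 → ℤ := fun t => (n t 0)^2 + n t 0 * n t 1 + (n t 1)^2 with hqdef
  set c : F3 → ZMod 3 := fun t => ((n t 0 + 2 * n t 1 : ℤ) : ZMod 3) with hcdef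
  have hBP : BP p p = -2/3 * ((∑ t : F3, q t : ℤ) : ℚ) := by
    rw [BP_self]
    push_cast
    rw [Finset.mul_sum]
    apply Finset.sum_congr rfl
    intro t _
    obtain ⟨h0, h1⟩ := hx t
    rw [h0, h1, hqdef]
    push_cast
    ring
  -- pairing with EV
  have hEVp : ∀ t : F3, BP p (EV t) = ((n t 0 : ℚ) + 2 * (n t 1 : ℚ)) := by
    intro t
    have h2 : (2 : ℕ) • Ev t 1 = Ev t 1 + Ev t 1 := two_nsmul _
    rw [EV, BP_add_right, h2, BP_add_right, hn t 0, hn t 1]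
    ring
  -- glue conditions
  have Hc : ∀ p0 p1 d : F3, d ≠ 0 →
      ∑ s : ZMod 3, c (p0 + s • d) = ∑ s : ZMod 3, c (p1 + s • d) := by
    intro p0 p1 d hd
    have hmem : eL (lineF p0 d) - eL (lineF p1 d) ∈ Plat :=
      Submodule.subset_span (Set.mem_union_right _
        ⟨lineF p0 d, lineF p1 d, ⟨p0, p1, d, hd, rfl, rfl⟩, rfl⟩)
    obtain ⟨m, hm⟩ := hp _ hmem
    have heL : ∀ pp : F3, BP p (eL (lineF pp d)) =
        (3:ℚ)⁻¹ * ∑ s : ZMod 3, ((n (pp + s • d) 0 : ℚ) + 2 * (n (pp + s • d) 1 : ℚ)) := by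
      intro pp
      rw [eL, BP_qsmul_right, BP_sum_right, sum_lineF _ _ _ hd]
      congr 1
      exact Finset.sum_congr rfl fun s _ => hEVp _
    rw [BP_sub_right, heL p0, heL p1] at hm
    have hz : ((∑ s : ZMod 3, (n (p0 + s • d) 0 + 2 * n (p0 + s • d) 1) : ℤ) : ℚ) -
        ((∑ s : ZMod 3, (n (p1 + s • d) 0 + 2 * n (p1 + s • d) 1) : ℤ) : ℚ) = 3 * m := by
      push_cast
      field_simp at hm
      linarith [hm]
    have hz' : (∑ s : ZMod 3, (n (p0 + s • d) 0 + 2 * n (p0 + s • d) 1)) -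
        (∑ s : ZMod 3, (n (p1 + s • d) 0 + 2 * n (p1 + s • d) 1)) = 3 * m := by
      exact_mod_cast hz
    have := congrArg (fun z : ℤ => (z : ZMod 3)) hz'
    simp only [Int.cast_sub, Int.cast_mul, Int.cast_sum, Int.cast_ofNat] at this
    push_cast at this
    simp only [hcdef]
    push_cast
    have h30 : (3 : ZMod 3) = 0 := by decide
    rw [h30, zero_mul] at this
    exact sub_eq_zero.mp this
  -- properties of q
  have hq0 : ∀ t, 0 ≤ q t := by
    intro t
    simp only [hqdef]
    nlinarith [sq_nonneg (n t 0 + n t 1), sq_nonneg (n t 0), sq_nonneg (n t 1)]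
  have hqz : ∀ t, q t = 0 → n t 0 = 0 ∧ n t 1 = 0 := by
    intro t hqt
    simp only [hqdef] at hqt
    constructor <;> nlinarith [sq_nonneg (n t 0 + n t 1), sq_nonneg (n t 0), sq_nonneg (n t 1)]
  have hqc : ∀ t, c t ≠ 0 → 1 ≤ q t := by
    intro t hct
    rcases lt_or_ge (q t) 1 with h | h
    · exfalso
      have h0 : q t = 0 := le_antisymm (by omega) (hq0 t)
      obtain ⟨ha, hb⟩ := hqz t h0
      apply hct
      simp only [hcdef, ha, hb]
      norm_num
    · exact h
  have hq3 : ∀ t, c t = 0 → 3 ∣ q t := by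
    intro t hct
    simp only [hcdef] at hct
    have hdvd : (3:ℤ) ∣ (n t 0 + 2 * n t 1) := (ZMod.intCast_zmod_eq_zero_iff_dvd _ 3).mp hct
    obtain ⟨k, hk⟩ := hdvd
    refine ⟨3*k^2 - (n t 0 * n t 1 + (n t 1)^2), ?_⟩
    simp only [hqdef]
    have : n t 0 = 3*k - 2 * n t 1 := by linarith
    rw [this]; ring
  -- existence of a nonzero coordinate
  have hex : ∃ t : F3, 1 ≤ q t := by
    obtain ⟨i, hi⟩ := Function.ne_iff.mp hpne
    obtain ⟨t, k⟩ := i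
    refine ⟨t, ?_⟩
    rcases lt_or_ge (q t) 1 with h | h
    · exfalso
      have h0 : q t = 0 := le_antisymm (by omega) (hq0 t)
      obtain ⟨ha, hb⟩ := hqz t h0
      obtain ⟨h1, h2⟩ := hx t
      rw [ha, hb] at h1 h2
      norm_num at h1 h2
      fin_cases k
      · exact hi (by simpa using h1)
      · exact hi (by simpa using h2)
    · exact h
  -- the sum of q is at least 3
  have hsum : 3 ≤ ∑ t : F3, q t := by
    obtain ⟨t0, ht0⟩ := hex
    by_cases hc0 : c t0 = 0
    · obtain ⟨k, hk⟩ := hq3 t0 hc0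
      have h3 : 3 ≤ q t0 := by omega
      calc 3 ≤ q t0 := h3
        _ ≤ ∑ t : F3, q t :=
          Finset.single_le_sum (fun t _ => hq0 t) (Finset.mem_univ t0)
    · obtain ⟨u, v, hu0, hv0, huv, hcu, hcv⟩ := weight3 c Hc t0 hc0
      have hsub : ({t0, u, v} : Finset F3) ⊆ Finset.univ := Finset.subset_univ _
      have hsum3 : ∑ t ∈ ({t0, u, v} : Finset F3), q t ≤ ∑ t : F3, q t :=
        Finset.sum_le_sum_of_subset_of_nonneg hsub (fun t _ _ => hq0 t)
      have hne1 : t0 ∉ ({u, v} : Finset F3) := by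
        simp [Ne.symm hu0, Ne.symm hv0]
      have hne2 : u ∉ ({v} : Finset F3) := by simp [huv]
      rw [Finset.sum_insert hne1, Finset.sum_insert hne2, Finset.sum_singleton] at hsum3
      have h1 := hqc t0 hc0
      have h2 := hqc u hcu
      have h3 := hqc v hcv
      omega
  -- conclude
  have hS : (3:ℚ) ≤ ((∑ t : F3, q t : ℤ) : ℚ) := by exact_mod_cast hsum
  have hle : BP p p ≤ -2 := by rw [hBP]; linarith
  exact ⟨le_trans (by linarith) (neg_le_abs (BP p p)), hle⟩
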